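/- Suppose M > 0, L ≥ max(0.62, 0.15*M), r ≥ 1 with r ≥ sup_{y∈[0,1]} |Q*s(y)|, 0 < t < 1/(B+C), and 0 < ε ≤ B/(2*(L*r + L + r)). Set δ₁ = L*ε/(1 - (L+r)*ε), δ₂ = L*r*ε/(1 - (L+r)*ε), and ρ = (1 - t*B) + t*((1 - t*B)*δ₁ + δ₂). Then ρ < 1, and if Φ* is an r-admissible fixed point of the graph transform in G_L and (Φₙ) is a sequence of r-admissible graphs in G_L such that Φₙ₊₁ is a graph-transform image of Φₙ for every n, then sup_{η∈ℝ} ‖Φₙ(η) - Φ*(η)‖_∞ ≤ ρ^n * sup_{η∈ℝ} ‖Φ₀(η) - Φ*(η)‖_∞ for all n; in particular the distance to Φ* decreases exponentially. -/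

import Mathlib

noncomputable section

open scoped BoundedContinuousFunction

namespace Budyko

/-- Solar constant (W/m²). -/
def Q : ℝ := 343
/-- OLR constant A (W/m²). -/
def A : ℝ := 202
/-- OLR constant B (W/m²/°C). -/
def B : ℝ := 1.9
/-- Transport constant C (W/m²/°C). -/
def C : ℝ := 3.04
/-- Critical temperature (°C). -/
def Tc : ℝ := -10

/-- Insolation distribution. -/
def s (y : ℝ) : ℝ := 1 - 0.241 * (3 * y ^ 2 - 1)

/-- Clamp to `[0,1]`. -/
def clamp (y : ℝ) : ℝ := min (max y 0) 1

/-- Insolation extended to the real line. -/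
def sTilde (y : ℝ) : ℝ := s (clamp y)

/-- Iceline-dependent smooth albedo with steepness `M`. -/
def albedo (M η y : ℝ) : ℝ := 0.47 + 0.15 * Real.tanh (M * (clamp y - η))

/-- The Budyko vector field `F(T,η)(y)`. -/
def F (M : ℝ) (T : ℝ →ᵇ ℝ) (η y : ℝ) : ℝ :=
  Q * sTilde y * (1 - albedo M η y) - (B + C) * T y - A + C * ∫ u in (0:ℝ)..1, T u

/-- `g(η) = ∫₀¹ Q s(y) (1 - a(η)(y)) dy`. -/
def g (M η : ℝ) : ℝ := ∫ y in (0:ℝ)..1, Q * s y * (1 - albedo M η y)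

/-- The local equilibrium temperature profile `T*(η)(y)`. -/
def Tstar (M η y : ℝ) : ℝ :=
  (Q * sTilde y * (1 - albedo M η y) - A + (C / B) * (g M η - A)) / (B + C)

/-- Membership in the class `G_L` of Lipschitz graphs. -/
def MemGL (L : ℝ) (Φ : ℝ → ℝ →ᵇ ℝ) : Prop :=
  ∀ ζ η : ℝ, ‖Φ ζ - Φ η‖ ≤ L * |ζ - η|

/-- A graph is `r`-admissible if `‖Φ‖_G ≤ r` and every `Φ(η)` is `r`-Lipschitz. -/
def Admissible (r : ℝ) (Φ : ℝ → ℝ →ᵇ ℝ) : Prop :=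
  (∀ η : ℝ, ‖Φ η‖ ≤ r) ∧ ∀ η x z : ℝ, |Φ η x - Φ η z| ≤ r * |x - z|

/-- `Ψ` is a graph-transform image of `Φ` (time step `t`, slow parameter `ε`). -/
def IsGTImage (M t ε : ℝ) (Φ Ψ : ℝ → ℝ →ᵇ ℝ) : Prop :=
  ∀ η ξ : ℝ, η = ξ + ε * t * (Φ ξ ξ - Tc) → ∀ y : ℝ, Ψ η y = Φ ξ y + t * F M (Φ ξ) ξ y

/-- `Φ` is a fixed point of the Budyko graph transform. -/
def IsGTFixed (M t ε : ℝ) (Φ : ℝ → ℝ →ᵇ ℝ) : Prop := IsGTImage M t ε Φ Φ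

lemma diag_cont {L r : ℝ} (Φ : ℝ → ℝ →ᵇ ℝ)
    (hG : ∀ ζ η : ℝ, ‖Φ ζ - Φ η‖ ≤ L * |ζ - η|)
    (hA : ∀ η x z : ℝ, |Φ η x - Φ η z| ≤ r * |x - z|) :
    Continuous fun ξ : ℝ => Φ ξ ξ := by
  apply LipschitzWith.continuous (K := (L + r).toNNReal)
  apply LipschitzWith.of_dist_le_mul
  intro x y
  rw [Real.dist_eq, Real.dist_eq]
  have h1 : |Φ x x - Φ y x| ≤ L * |x - y| := by
    have := (Φ x - Φ y).norm_coe_le_norm x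
    simp only [BoundedContinuousFunction.coe_sub, Pi.sub_apply, Real.norm_eq_abs] at this
    exact this.trans (hG x y)
  have h2 : |Φ y x - Φ y y| ≤ r * |x - y| := hA y x y
  calc |Φ x x - Φ y y| ≤ |Φ x x - Φ y x| + |Φ y x - Φ y y| := abs_sub_le _ _ _
    _ ≤ (L + r) * |x - y| := by linarith
    _ ≤ ((L + r).toNNReal : ℝ) * |x - y| :=
        mul_le_mul_of_nonneg_right (Real.le_coe_toNNReal _) (abs_nonneg _)

lemma gt_surj {L r ε t : ℝ} (hε : 0 ≤ ε) (ht : 0 ≤ t) (hr0 : 0 ≤ r)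
    (Φ : ℝ → ℝ →ᵇ ℝ)
    (hG : ∀ ζ η : ℝ, ‖Φ ζ - Φ η‖ ≤ L * |ζ - η|)
    (hBnd : ∀ η : ℝ, ‖Φ η‖ ≤ r)
    (hA : ∀ η x z : ℝ, |Φ η x - Φ η z| ≤ r * |x - z|) (η : ℝ) :
    ∃ ξ, η = ξ + ε * t * (Φ ξ ξ - Tc) := by
  set c : ℝ := ε * t * (r + 10) with hc
  have hc0 : 0 ≤ c := by positivity
  have hbd : ∀ ξ : ℝ, |ε * t * (Φ ξ ξ - Tc)| ≤ c := by
    intro ξ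
    have h1 : |Φ ξ ξ| ≤ r := by
      have := (Φ ξ).norm_coe_le_norm ξ
      rw [Real.norm_eq_abs] at this
      exact this.trans (hBnd ξ)
    have : |Φ ξ ξ - Tc| ≤ r + 10 := by
      rw [show Tc = -10 from rfl]
      rw [abs_le] at h1 ⊢; constructor <;> linarith [h1.1, h1.2]
    calc |ε * t * (Φ ξ ξ - Tc)| = ε * t * |Φ ξ ξ - Tc| := by
          rw [abs_mul, abs_of_nonneg (by positivity : (0:ℝ) ≤ ε * t)]
      _ ≤ ε * t * (r + 10) := by
          apply mul_le_mul_of_nonneg_left this (by positivity)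
  have hcont : Continuous fun ξ : ℝ => ξ + ε * t * (Φ ξ ξ - Tc) := by
    apply continuous_id.add
    exact (continuous_const.mul ((diag_cont Φ hG hA).sub continuous_const))
  set h : ℝ → ℝ := fun ξ => ξ + ε * t * (Φ ξ ξ - Tc) with hh
  have hmem : η ∈ Set.Icc (h (η - c - 1)) (h (η + c + 1)) := by
    constructor
    · have := (abs_le.mp (hbd (η - c - 1))).2
      simp only [h]; linarith
    · have := (abs_le.mp (hbd (η + c + 1))).1
      simp only [h]; linarith
  have hsub := intermediate_value_Icc (by linarith : η - c - 1 ≤ η + c + 1) hcont.continuousOn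
  obtain ⟨ξ, _, hξ⟩ := hsub hmem
  exact ⟨ξ, hξ.symm⟩

/-- One-step contraction bound for the graph transform. -/
lemma step_bound {M L r t ε : ℝ} (ht0 : 0 ≤ t) (hε : 0 ≤ ε) (hL0 : 0 ≤ L) (hr0 : 0 ≤ r)
    (htBC : t * (B + C) ≤ 1)
    (Φ Ψ Φs : ℝ → ℝ →ᵇ ℝ)
    (hAΦ : Admissible r Φ) (hGΦ : MemGL L Φ)
    (hGs : MemGL L Φs)
    (hIm : IsGTImage M t ε Φ Ψ) (hFix : IsGTFixed M t ε Φs)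
    (S : ℝ) (hS : ∀ ξ : ℝ, ‖Φ ξ - Φs ξ‖ ≤ S) (η : ℝ) :
    ‖Ψ η - Φs η‖ ≤ (1 - t * B + L * ε * t) * S := by
  have htC : 0 ≤ t * C := by
    have : (0:ℝ) ≤ C := by norm_num [C]
    positivity
  have h1tBC : 0 ≤ 1 - t * (B + C) := by linarith
  have hS0 : 0 ≤ S := le_trans (norm_nonneg _) (hS 0)
  have hκ0 : 0 ≤ 1 - t * B + L * ε * t := by
    have : t * B ≤ t * (B + C) := by nlinarith
    nlinarith [mul_nonneg (mul_nonneg hL0 hε) ht0]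
  obtain ⟨ξ, hξ⟩ := gt_surj hε ht0 hr0 Φ hGΦ hAΦ.1 hAΦ.2 η
  set η' : ℝ := ξ + ε * t * (Φs ξ ξ - Tc) with hη'
  have h1 := hIm η ξ hξ
  have h2 := hFix η' ξ rfl
  set D : ℝ →ᵇ ℝ := Φ ξ - Φs ξ with hD
  have hDle : ‖D‖ ≤ S := hS ξ
  have hDapp : ∀ u : ℝ, D u = Φ ξ u - Φs ξ u := fun u => rfl
  have hDnorm : ∀ u : ℝ, |D u| ≤ ‖D‖ := by
    intro u
    have := D.norm_coe_le_norm u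
    rwa [Real.norm_eq_abs] at this
  have hint : (∫ u in (0:ℝ)..1, D u) =
      (∫ u in (0:ℝ)..1, Φ ξ u) - ∫ u in (0:ℝ)..1, Φs ξ u := by
    simp only [hDapp]
    exact intervalIntegral.integral_sub
      ((Φ ξ).continuous.intervalIntegrable _ _) ((Φs ξ).continuous.intervalIntegrable _ _)
  have hintbd : |∫ u in (0:ℝ)..1, D u| ≤ ‖D‖ := by
    have := intervalIntegral.norm_integral_le_of_norm_le_const
      (a := (0:ℝ)) (b := 1) (C := ‖D‖) (f := fun u => D u)
      (fun x _ => by rw [Real.norm_eq_abs]; exact hDnorm x)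
    rw [Real.norm_eq_abs] at this
    simpa using this
  rw [BoundedContinuousFunction.norm_le (by positivity)]
  intro y
  rw [BoundedContinuousFunction.sub_apply, Real.norm_eq_abs]
  have key : Ψ η y - Φs η y =
      ((1 - t * (B + C)) * D y + t * C * (∫ u in (0:ℝ)..1, D u))
        + (Φs η' y - Φs η y) := by
    rw [h1 y, h2 y, hint, hDapp]
    simp only [F]
    ring
  have hterm3 : |Φs η' y - Φs η y| ≤ L * ε * t * ‖D‖ := by
    have hd : |(Φs η' - Φs η) y| ≤ ‖Φs η' - Φs η‖ := by
      have := (Φs η' - Φs η).norm_coe_le_norm y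
      rwa [Real.norm_eq_abs] at this
    rw [BoundedContinuousFunction.sub_apply] at hd
    have hd2 : ‖Φs η' - Φs η‖ ≤ L * |η' - η| := hGs η' η
    have hd3 : |η' - η| ≤ ε * t * ‖D‖ := by
      have : η' - η = ε * t * (Φs ξ ξ - Φ ξ ξ) := by rw [hη', hξ]; ring
      rw [this, abs_mul, abs_of_nonneg (by positivity : (0:ℝ) ≤ ε * t)]
      have : |Φs ξ ξ - Φ ξ ξ| = |D ξ| := by rw [hDapp]; rw [abs_sub_comm]
      rw [this]
      exact mul_le_mul_of_nonneg_left (hDnorm ξ) (by positivity)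
    calc |Φs η' y - Φs η y| ≤ L * |η' - η| := hd.trans hd2
      _ ≤ L * (ε * t * ‖D‖) := mul_le_mul_of_nonneg_left hd3 hL0
      _ = L * ε * t * ‖D‖ := by ring
  have hterm1 : |(1 - t * (B + C)) * D y| ≤ (1 - t * (B + C)) * ‖D‖ := by
    rw [abs_mul, abs_of_nonneg h1tBC]
    exact mul_le_mul_of_nonneg_left (hDnorm y) h1tBC
  have hterm2 : |t * C * (∫ u in (0:ℝ)..1, D u)| ≤ t * C * ‖D‖ := by
    rw [abs_mul, abs_of_nonneg htC]
    exact mul_le_mul_of_nonneg_left hintbd htC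
  calc |Ψ η y - Φs η y| ≤ |(1 - t * (B + C)) * D y + t * C * (∫ u in (0:ℝ)..1, D u)|
        + |Φs η' y - Φs η y| := by rw [key]; exact abs_add_le _ _
    _ ≤ ((1 - t * (B + C)) * ‖D‖ + t * C * ‖D‖) + L * ε * t * ‖D‖ := by
        have := abs_add_le ((1 - t * (B + C)) * D y) (t * C * (∫ u in (0:ℝ)..1, D u))
        linarith
    _ = (1 - t * B + L * ε * t) * ‖D‖ := by ring
    _ ≤ (1 - t * B + L * ε * t) * S := mul_le_mul_of_nonneg_left hDle hκ0



set_option maxHeartbeats 1600000 in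
/-- Numeric facts about the contraction rate. -/
lemma rate_facts (L r t ε δ₁ δ₂ ρ : ℝ)
    (hL0 : (0.62:ℝ) ≤ L) (hr1 : 1 ≤ r)
    (ht0 : 0 < t) (ht1 : t < 1 / (B + C))
    (hε0 : 0 < ε) (hε1 : ε ≤ B / (2 * (L * r + L + r)))
    (hδ₁ : δ₁ = L * ε / (1 - (L + r) * ε))
    (hδ₂ : δ₂ = L * r * ε / (1 - (L + r) * ε))
    (hρ : ρ = (1 - t * B) + t * ((1 - t * B) * δ₁ + δ₂)) :
    t * (B + C) ≤ 1 ∧ 0 ≤ 1 - t * B + L * ε * t ∧ 1 - t * B + L * ε * t ≤ ρ ∧ ρ < 1 := by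
  have hB : B = 1.9 := rfl
  have hC : C = 3.04 := rfl
  have hL0' : (0:ℝ) ≤ L := by linarith
  have hr0 : (0:ℝ) ≤ r := by linarith
  have hBC0 : (0:ℝ) < B + C := by rw [hB, hC]; norm_num
  have htBC : t * (B + C) < 1 := by
    have := (lt_div_iff₀ hBC0).mp ht1
    linarith
  have htB1 : t * B < 1 := by nlinarith [mul_pos ht0 (show (0:ℝ) < C by rw [hC]; norm_num)]
  have htB0 : 0 ≤ t * B := by nlinarith
  have hden0 : (0:ℝ) < 2 * (L * r + L + r) := by nlinarith
  have hε1' : ε * (2 * (L * r + L + r)) ≤ B := (le_div_iff₀ hden0).mp hε1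
  have hLrε : (L + r) * ε < 1 := by
    nlinarith [mul_pos hε0 (mul_pos (show (0:ℝ) < L by linarith) (show (0:ℝ) < r by linarith))]
  have hden : (0:ℝ) < 1 - (L + r) * ε := by linarith
  have hδ₁0 : 0 ≤ δ₁ := by rw [hδ₁]; positivity
  have hδ₂r : δ₂ = r * δ₁ := by rw [hδ₁, hδ₂]; field_simp
  have hδ₂0 : 0 ≤ δ₂ := by rw [hδ₂r]; positivity
  have hδ₁Lε : L * ε ≤ δ₁ := by
    rw [hδ₁, le_div_iff₀ hden]
    have h1 : (L + r) * ε ≥ 0 := by positivity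
    nlinarith [mul_nonneg (mul_nonneg hL0' hε0.le) h1]
  have hκρ : 1 - t * B + L * ε * t ≤ ρ := by
    rw [hρ, hδ₂r]
    nlinarith [mul_nonneg ht0.le (sub_nonneg.mpr hδ₁Lε),
      mul_nonneg (mul_nonneg ht0.le (sub_nonneg.mpr (le_trans htB1.le hr1 : t * B ≤ r))) hδ₁0]
  have hκ0 : 0 ≤ 1 - t * B + L * ε * t := by
    nlinarith [mul_nonneg (mul_nonneg hL0' hε0.le) ht0.le]
  have hstrict : ε * (L + L * r + B * L + B * r) < B := by
    rw [hB] at hε1' ⊢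
    nlinarith [mul_pos hε0 (show (0:ℝ) < L * r - 0.9 * L + 0.1 * r by nlinarith)]
  have hsum : δ₁ + δ₂ < B := by
    rw [hδ₁, hδ₂, ← add_div, div_lt_iff₀ hden]
    nlinarith
  have hρ1 : ρ < 1 := by
    rw [hρ]
    nlinarith [mul_pos ht0 (sub_pos.mpr hsum),
      mul_nonneg (mul_nonneg ht0.le htB0) hδ₁0]
  exact ⟨htBC.le, hκ0, hκρ, hρ1⟩

/-- Exponential attraction to the invariant graph at rate ρ < 1. -/
theorem exponential_attraction (M L r t ε δ₁ δ₂ ρ : ℝ)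
    (hM : 0 < M) (hL : max 0.62 (0.15 * M) ≤ L) (hr1 : 1 ≤ r)
    (hrs : ∀ y ∈ Set.Icc (0:ℝ) 1, |Q * s y| ≤ r)
    (ht0 : 0 < t) (ht1 : t < 1 / (B + C))
    (hε0 : 0 < ε) (hε1 : ε ≤ B / (2 * (L * r + L + r)))
    (hδ₁ : δ₁ = L * ε / (1 - (L + r) * ε))
    (hδ₂ : δ₂ = L * r * ε / (1 - (L + r) * ε))
    (hρ : ρ = (1 - t * B) + t * ((1 - t * B) * δ₁ + δ₂)) :
    ρ < 1 ∧
      ∀ Φs : ℝ → ℝ →ᵇ ℝ, Admissible r Φs → MemGL L Φs → IsGTFixed M t ε Φs →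
        ∀ Φ : ℕ → ℝ → ℝ →ᵇ ℝ,
          (∀ n : ℕ, Admissible r (Φ n) ∧ MemGL L (Φ n)) →
          (∀ n : ℕ, IsGTImage M t ε (Φ n) (Φ (n + 1))) →
          ∀ n : ℕ, (⨆ η : ℝ, ‖Φ n η - Φs η‖) ≤ ρ ^ n * ⨆ η : ℝ, ‖Φ 0 η - Φs η‖ := by
  obtain ⟨htBC, hκ0, hκρ, hρ1⟩ := rate_facts L r t ε δ₁ δ₂ ρ
    (le_trans (le_max_left _ _) hL) hr1 ht0 ht1 hε0 hε1 hδ₁ hδ₂ hρ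
  have hρ0 : 0 ≤ ρ := le_trans hκ0 hκρ
  refine ⟨hρ1, ?_⟩
  intro Φs hAs hGs hFix Φ hAG hIm n
  have hL0' : (0:ℝ) ≤ L := le_trans (by norm_num) (le_trans (le_max_left 0.62 (0.15 * M)) hL)
  have hr0 : (0:ℝ) ≤ r := by linarith
  have hbdd : ∀ m : ℕ, BddAbove (Set.range fun η : ℝ => ‖Φ m η - Φs η‖) := by
    intro m
    refine ⟨2 * r, ?_⟩
    rintro x ⟨η, rfl⟩
    calc ‖Φ m η - Φs η‖ ≤ ‖Φ m η‖ + ‖Φs η‖ := norm_sub_le _ _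
      _ ≤ 2 * r := by linarith [(hAG m).1.1 η, hAs.1 η]
  have hle : ∀ m : ℕ, ∀ ξ : ℝ, ‖Φ m ξ - Φs ξ‖ ≤ ⨆ η : ℝ, ‖Φ m η - Φs η‖ :=
    fun m ξ => le_ciSup (hbdd m) ξ
  have hSnn : ∀ m : ℕ, 0 ≤ ⨆ η : ℝ, ‖Φ m η - Φs η‖ :=
    fun m => le_trans (norm_nonneg _) (hle m 0)
  have hstep : ∀ m : ℕ,
      (⨆ η : ℝ, ‖Φ (m + 1) η - Φs η‖) ≤ ρ * ⨆ η : ℝ, ‖Φ m η - Φs η‖ := by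
    intro m
    apply ciSup_le
    intro η
    calc ‖Φ (m + 1) η - Φs η‖ ≤ (1 - t * B + L * ε * t) * ⨆ η : ℝ, ‖Φ m η - Φs η‖ :=
          step_bound ht0.le hε0.le hL0' hr0 htBC (Φ m) (Φ (m + 1)) Φs
            (hAG m).1 (hAG m).2 hGs (hIm m) hFix _ (hle m) η
      _ ≤ ρ * ⨆ η : ℝ, ‖Φ m η - Φs η‖ :=
          mul_le_mul_of_nonneg_right hκρ (hSnn m)
  induction n with
  | zero => simp
  | succ n ih =>
      calc (⨆ η : ℝ, ‖Φ (n + 1) η - Φs η‖) ≤ ρ * ⨆ η : ℝ, ‖Φ n η - Φs η‖ := hstep n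
        _ ≤ ρ * (ρ ^ n * ⨆ η : ℝ, ‖Φ 0 η - Φs η‖) := mul_le_mul_of_nonneg_left ih hρ0
        _ = ρ ^ (n + 1) * ⨆ η : ℝ, ‖Φ 0 η - Φs η‖ := by ring
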